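/- Let w(a) = c > 3 for all a ∈ A and w(b) = 1 for all b ∈ B, and let M1, M2 be two popular matchings. Then every path component P of M1 △ M2 has one endpoint in A and the other endpoint in B. -/

import Mathlib

structure PMInstance (V : Type) [Fintype V] [DecidableEq V] where
  A : Finset V
  E : V → V → Prop
  Esymm : ∀ u v : V, E u v → E v u
  loopless : ∀ v : V, ¬ E v v
  bipartite : ∀ u v : V, E u v → (u ∈ A ↔ v ∉ A)
  pref : V → V → V → Prop
  pref_irrefl : ∀ v u : V, ¬ pref v u u
  pref_trans : ∀ v u z t : V, pref v u z → pref v z t → pref v u t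
  pref_asymm : ∀ v u z : V, pref v u z → ¬ pref v z u
  pref_total : ∀ v u z : V, E v u → E v z → u ≠ z → pref v u z ∨ pref v z u
  w : V → ℚ
  w_nonneg : ∀ v : V, 0 ≤ w v

structure Matching (V : Type) [Fintype V] [DecidableEq V] (E : V → V → Prop) where
  m : V → Option V
  msymm : ∀ u v : V, m u = some v ↔ m v = some u
  valid : ∀ u v : V, m u = some v → E u v

attribute [local instance] Classical.propDecidable

variable {V : Type} [Fintype V] [DecidableEq V]

/-- Vertex `v` prefers matching `M` to matching `M'`. -/
def prefersVx (I : PMInstance V) (M M' : Matching V I.E) (v : V) : Prop :=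
  (M'.m v = none ∧ M.m v ≠ none) ∨
    (∃ u u' : V, M.m v = some u ∧ M'.m v = some u' ∧ I.pref v u u')

/-- Total weight of the vertices preferring `M` to `M'`. -/
noncomputable def weightPref (I : PMInstance V) (M M' : Matching V I.E) : ℚ :=
  ∑ v : V, if prefersVx I M M' v then I.w v else 0

/-- A matching is popular if it never loses a weighted head-to-head comparison. -/
def popular (I : PMInstance V) (M : Matching V I.E) : Prop :=
  ∀ M' : Matching V I.E, weightPref I M' M ≤ weightPref I M M'

/-- Edge relation of the symmetric difference of two matchings. -/
def symmDiffRel {E : V → V → Prop} (M₁ M₂ : Matching V E) (u v : V) : Prop :=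
  (M₁.m u = some v ∧ M₂.m u ≠ some v) ∨ (M₂.m u = some v ∧ M₁.m u ≠ some v)

/-- `v` is an endpoint (degree-one vertex) of a path component of `M₁ △ M₂`. -/
def endpointOf {E : V → V → Prop} (M₁ M₂ : Matching V E) (v : V) : Prop :=
  ((∃ z, M₁.m v = some z ∧ symmDiffRel M₁ M₂ v z) ∧
      ¬ ∃ z, M₂.m v = some z ∧ symmDiffRel M₁ M₂ v z) ∨
    ((∃ z, M₂.m v = some z ∧ symmDiffRel M₁ M₂ v z) ∧
      ¬ ∃ z, M₁.m v = some z ∧ symmDiffRel M₁ M₂ v z)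

namespace PopAux

variable {V : Type} [Fintype V] [DecidableEq V]

lemma m_ne_self (I : PMInstance V) (M : Matching V I.E) (a b : V) (h : M.m a = some b) :
    a ≠ b := fun he => I.loopless b (he ▸ M.valid a b h)

/-- Remove an edge from a matching. -/
lemma removeEdge (I : PMInstance V) (M : Matching V I.E) (a b : V) (hab : M.m a = some b) :
    ∃ M' : Matching V I.E, M'.m a = none ∧ M'.m b = none ∧
      ∀ z, z ≠ a → z ≠ b → M'.m z = M.m z := by
  have hba : M.m b = some a := (M.msymm a b).1 hab
  have hne : a ≠ b := m_ne_self I M a b hab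
  have k1 : ∀ z, M.m z = some a ↔ z = b := fun z =>
    ⟨fun h => Option.some_injective V (((M.msymm z a).1 h).symm.trans hab), fun h => h ▸ hba⟩
  have k2 : ∀ z, M.m z = some b ↔ z = a := fun z =>
    ⟨fun h => Option.some_injective V (((M.msymm z b).1 h).symm.trans hba), fun h => h ▸ hab⟩
  refine ⟨⟨fun z => if z = a then none else if z = b then none else M.m z, ?_, ?_⟩, by simp, by
    simp [hne.symm], fun z hza hzb => by simp [hza, hzb]⟩
  · intro u v
    by_cases hua : u = a <;> by_cases hub : u = b <;>
      by_cases hva : v = a <;> by_cases hvb : v = b <;>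
        simp_all [M.msymm u v]
  · intro u v
    by_cases hua : u = a <;> by_cases hub : u = b <;> simp_all
    intro h; exact M.valid u v h

/-- Move an edge: `a` (unmatched) gets matched to `b`, whose old partner `a'` becomes free. -/
lemma transfer (I : PMInstance V) (M : Matching V I.E) (a b a' : V)
    (ha : M.m a = none) (hb : M.m b = some a') (hE : I.E a b) :
    ∃ M' : Matching V I.E, M'.m a = some b ∧ M'.m b = some a ∧ M'.m a' = none ∧
      ∀ z, z ≠ a → z ≠ b → z ≠ a' → M'.m z = M.m z := by
  have hab : a ≠ b := fun he => I.loopless b (he ▸ hE)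
  have hba' : b ≠ a' := m_ne_self I M b a' hb
  have ha'b : M.m a' = some b := (M.msymm b a').1 hb
  have haa' : a ≠ a' := fun he => by rw [he, ha'b] at ha; exact nomatch ha
  have k1 : ∀ z, M.m z = some b ↔ z = a' := fun z =>
    ⟨fun h => Option.some_injective V (((M.msymm z b).1 h).symm.trans hb), fun h => h ▸ ha'b⟩
  have k2 : ∀ z, ¬ (M.m z = some a) := fun z h => by
    rw [(M.msymm z a).1 h] at ha; exact nomatch ha
  have k3 : ∀ z, M.m z = some a' ↔ z = b := fun z =>
    ⟨fun h => Option.some_injective V (((M.msymm z a').1 h).symm.trans ha'b),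
     fun h => h ▸ hb⟩
  refine ⟨⟨fun z => if z = a then some b else if z = b then some a else if z = a' then none
      else M.m z, ?_, ?_⟩, by simp, by simp [hab.symm], by simp [haa'.symm, hba'.symm],
      fun z h1 h2 h3 => by simp [h1, h2, h3]⟩
  · intro u v
    by_cases hua : u = a <;> by_cases hub : u = b <;> by_cases hua' : u = a' <;>
      by_cases hva : v = a <;> by_cases hvb : v = b <;> by_cases hva' : v = a' <;>
        simp_all [M.msymm u v]
    · exact fun h => hvb h.symm
    · exact fun h => hva h.symm
    · exact fun h => hub h.symm
    · exact fun h => hua h.symm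
  · intro u v
    by_cases hua : u = a <;> by_cases hub : u = b <;> by_cases hua' : u = a' <;> simp_all
    · exact fun h => h ▸ hE
    · exact fun h => h ▸ I.Esymm a b hE
    · intro h; exact M.valid u v h

end PopAux
namespace PopAux
variable {V : Type} [Fintype V] [DecidableEq V]

noncomputable def vote (I : PMInstance V) (M M' : Matching V I.E) (z : V) : ℚ :=
  (if prefersVx I M M' z then I.w z else 0) - (if prefersVx I M' M z then I.w z else 0)

noncomputable def Phi (I : PMInstance V) (M M' : Matching V I.E) : ℚ :=
  weightPref I M M' - weightPref I M' M

lemma Phi_eq_sum (I : PMInstance V) (M M' : Matching V I.E) :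
    Phi I M M' = ∑ z : V, vote I M M' z := by
  simp [Phi, weightPref, vote, Finset.sum_sub_distrib]

lemma Phi_nonpos (I : PMInstance V) (M M' : Matching V I.E) (h : popular I M') :
    Phi I M M' ≤ 0 := sub_nonpos.2 (h M)

lemma prefersVx_congr (I : PMInstance V) {M M' Mb Mb' : Matching V I.E} {z : V}
    (h : M.m z = Mb.m z) (h' : M'.m z = Mb'.m z) :
    prefersVx I M M' z ↔ prefersVx I Mb Mb' z := by
  unfold prefersVx; rw [h, h']

lemma vote_congr (I : PMInstance V) {M M' Mb Mb' : Matching V I.E} {z : V}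
    (h : M.m z = Mb.m z) (h' : M'.m z = Mb'.m z) :
    vote I M M' z = vote I Mb Mb' z := by
  unfold vote
  rw [if_congr (prefersVx_congr I h h') rfl rfl, if_congr (prefersVx_congr I h' h) rfl rfl]

lemma not_prefersVx_same (I : PMInstance V) {M M' : Matching V I.E} {z : V}
    (h : M.m z = M'.m z) : ¬ prefersVx I M M' z := by
  rintro (⟨h1, h2⟩ | ⟨u, u', hu, hu', hp⟩)
  · rw [h, h1] at h2; exact h2 rfl
  · have heq : u = u' := Option.some_injective V (hu.symm.trans (h.trans hu'))
    subst heq; exact I.pref_irrefl z u hp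

lemma vote_same (I : PMInstance V) {M M' : Matching V I.E} {z : V}
    (h : M.m z = M'.m z) : vote I M M' z = 0 := by
  unfold vote
  rw [if_neg (not_prefersVx_same I h), if_neg (not_prefersVx_same I h.symm), sub_zero]

lemma vote_none_some (I : PMInstance V) {M M' : Matching V I.E} {z y : V}
    (h : M.m z = none) (h' : M'.m z = some y) : vote I M M' z = - I.w z := by
  unfold vote
  have hnp : ¬ prefersVx I M M' z := by
    rintro (⟨h1, h2⟩ | ⟨a, a', ha, ha', hp⟩)
    · rw [h'] at h1; exact nomatch h1
    · rw [h] at ha; exact nomatch ha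
  have hpv : prefersVx I M' M z := Or.inl ⟨h, by rw [h']; simp⟩
  rw [if_neg hnp, if_pos hpv, zero_sub]

lemma vote_some_none (I : PMInstance V) {M M' : Matching V I.E} {z y : V}
    (h : M.m z = some y) (h' : M'.m z = none) : vote I M M' z = I.w z := by
  have := vote_none_some I h' h
  unfold vote at this ⊢; linarith

lemma pref_exactly_one (I : PMInstance V) {z y y' : V} (hE : I.E z y) (hE' : I.E z y')
    (hne : y ≠ y') : I.pref z y y' ↔ ¬ I.pref z y' y := by
  constructor
  · exact fun h => I.pref_asymm z y y' h
  · intro h; rcases I.pref_total z y y' hE hE' hne with h1 | h1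
    · exact h1
    · exact absurd h1 h

lemma vote_some_some (I : PMInstance V) {M M' : Matching V I.E} {z y y' : V}
    (h : M.m z = some y) (h' : M'.m z = some y') (hne : y ≠ y') :
    vote I M M' z = if I.pref z y y' then I.w z else - I.w z := by
  have hE : I.E z y := M.valid z y h
  have hE' : I.E z y' := M'.valid z y' h'
  unfold vote
  by_cases hp : I.pref z y y'
  · have hpv : prefersVx I M M' z := Or.inr ⟨y, y', h, h', hp⟩
    have hnp : ¬ prefersVx I M' M z := by
      rintro (⟨h1, _⟩ | ⟨a, a', ha, ha', hpp⟩)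
      · rw [h] at h1; exact nomatch h1
      · rw [h'] at ha; rw [h] at ha'; cases ha; cases ha'
        exact I.pref_asymm z y y' hp hpp
    rw [if_pos hp, if_pos hpv, if_neg hnp, sub_zero]
  · have hp' : I.pref z y' y := ((pref_exactly_one I hE' hE hne.symm).2 hp)
    have hpv : prefersVx I M' M z := Or.inr ⟨y', y, h', h, hp'⟩
    have hnp : ¬ prefersVx I M M' z := by
      rintro (⟨h1, _⟩ | ⟨a, a', ha, ha', hpp⟩)
      · rw [h'] at h1; exact nomatch h1
      · rw [h] at ha; rw [h'] at ha'; cases ha; cases ha'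
        exact hp hpp
    rw [if_neg hp, if_pos hpv, if_neg hnp, zero_sub]

lemma ite_pref_flip (I : PMInstance V) {z y y' : V} (hE : I.E z y) (hE' : I.E z y')
    (hne : y ≠ y') :
    (if I.pref z y y' then I.w z else - I.w z)
      = - (if I.pref z y' y then I.w z else - I.w z) := by
  by_cases hp : I.pref z y y'
  · rw [if_pos hp, if_neg (I.pref_asymm z y y' hp), neg_neg]
  · rw [if_neg hp, if_pos ((pref_exactly_one I hE' hE hne.symm).2 hp)]

lemma Phi_diff (I : PMInstance V) (M Mb M' : Matching V I.E) (s : Finset V)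
    (hoff : ∀ z ∉ s, M.m z = Mb.m z) :
    Phi I M M' = Phi I Mb M' + ∑ z ∈ s, (vote I M M' z - vote I Mb M' z) := by
  rw [Phi_eq_sum, Phi_eq_sum]
  have : ∑ z ∈ s, (vote I M M' z - vote I Mb M' z)
      = ∑ z : V, (vote I M M' z - vote I Mb M' z) := by
    refine Finset.sum_subset (Finset.subset_univ s) ?_
    intro z _ hz
    rw [vote_congr I (Mb := Mb) (Mb' := M') (hoff z hz) rfl, sub_self]
  rw [this, Finset.sum_sub_distrib]; ring

end PopAux
namespace PopAux
variable {V : Type} [Fintype V] [DecidableEq V]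

def m1p (x : ℕ → V) (t : ℕ) : V := if Odd t then x (t-1) else x (t+1)
def m2p (x : ℕ → V) (t : ℕ) : V := if Odd t then x (t+1) else x (t-1)

noncomputable def vt (I : PMInstance V) (x : ℕ → V) (t : ℕ) : ℚ :=
  if I.pref (x t) (m2p x t) (m1p x t) then I.w (x t) else - I.w (x t)

noncomputable def Ssum (I : PMInstance V) (x : ℕ → V) (j : ℕ) : ℚ :=
  ∑ t ∈ Finset.Ico 1 j, vt I x t

lemma Ssum_one (I : PMInstance V) (x : ℕ → V) : Ssum I x 1 = 0 := by simp [Ssum]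

lemma Ssum_succ (I : PMInstance V) (x : ℕ → V) (j : ℕ) (h : 1 ≤ j) :
    Ssum I x (j+1) = Ssum I x j + vt I x j := Finset.sum_Ico_succ_top h _

lemma vt_odd (I : PMInstance V) (x : ℕ → V) {t : ℕ} (ht : Odd t) :
    vt I x t = if I.pref (x t) (x (t+1)) (x (t-1)) then I.w (x t) else - I.w (x t) := by
  unfold vt m2p m1p; rw [if_pos ht, if_pos ht]

lemma vt_even (I : PMInstance V) (x : ℕ → V) {t : ℕ} (ht : Even t) :
    vt I x t = if I.pref (x t) (x (t-1)) (x (t+1)) then I.w (x t) else - I.w (x t) := by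
  have ht' : ¬ Odd t := Nat.not_odd_iff_even.mpr ht
  unfold vt m2p m1p; rw [if_neg ht', if_neg ht']

lemma vt_pm (I : PMInstance V) (x : ℕ → V) (t : ℕ) :
    vt I x t = I.w (x t) ∨ vt I x t = - I.w (x t) := by
  unfold vt; split <;> simp

lemma sum3 {a b c : V} (f : V → ℚ) (hab : a ≠ b) (hac : a ≠ c) (hbc : b ≠ c) :
    ∑ z ∈ ({a, b, c} : Finset V), f z = f a + f b + f c := by
  rw [Finset.sum_insert (by simp [hab, hac]), Finset.sum_insert (by simp [hbc]),
    Finset.sum_singleton]; ring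

lemma sum2 {a b : V} (f : V → ℚ) (hab : a ≠ b) :
    ∑ z ∈ ({a, b} : Finset V), f z = f a + f b := by
  rw [Finset.sum_insert (by simp [hab]), Finset.sum_singleton]

lemma Phi_self (I : PMInstance V) (M : Matching V I.E) : Phi I M M = 0 := sub_self _

section PathSec

variable (I : PMInstance V) (M₁ M₂ : Matching V I.E) (x : ℕ → V) (N : ℕ)

lemma P1core
    (hinj : ∀ i, i ≤ N → ∀ k, k ≤ N → x i = x k → i = k)
    (hE1 : ∀ i, i < N → Even i → M₁.m (x i) = some (x (i+1)))
    (hE2 : ∀ i, i < N → Odd i → M₂.m (x i) = some (x (i+1))) :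
    ∀ j, Odd j → j ≤ N → ∃ Mj : Matching V I.E,
      Mj.m (x j) = none ∧
      (∀ z, (∀ i, i ≤ j → z ≠ x i) → Mj.m z = M₁.m z) ∧
      Phi I Mj M₁ = - I.w (x 0) + Ssum I x j - I.w (x j) := by
  have hxne : ∀ i, i ≤ N → ∀ k, k ≤ N → i ≠ k → x i ≠ x k :=
    fun i hi k hk hik he => hik (hinj i hi k hk he)
  intro j
  induction j using Nat.strong_induction_on with
  | _ j IH =>
    intro hodd hjN
    by_cases hj1 : j = 1
    · subst hj1
      have h01 : M₁.m (x 0) = some (x 1) := hE1 0 (by omega) Even.zero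
      have h10 : M₁.m (x 1) = some (x 0) := (M₁.msymm _ _).1 h01
      obtain ⟨M', h0', h1', hoff⟩ := removeEdge I M₁ (x 0) (x 1) h01
      refine ⟨M', h1', fun z hz => hoff z (hz 0 (by omega)) (hz 1 le_rfl), ?_⟩
      have hne01 : x 0 ≠ x 1 := hxne 0 (by omega) 1 (by omega) (by omega)
      have hPhi := Phi_diff I M' M₁ M₁ {x 0, x 1} (fun z hz => by
        simp only [Finset.mem_insert, Finset.mem_singleton] at hz
        push_neg at hz
        exact hoff z hz.1 hz.2)
      rw [hPhi, Phi_self, sum2 _ hne01, vote_none_some I h0' h01,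
        vote_none_some I h1' h10, vote_same I (M := M₁) (z := x 0) rfl,
        vote_same I (M := M₁) (z := x 1) rfl, Ssum_one]
      ring
    · obtain ⟨m0, hm0⟩ := hodd
      obtain ⟨l, rfl⟩ : ∃ l, j = l + 2 := ⟨j - 2, by omega⟩
      have hodd' : Odd (l + 2) := ⟨m0, hm0⟩
      have hlodd : Odd l := by
        rcases hodd' with ⟨m, hm⟩; exact ⟨m - 1, by omega⟩
      have hlpos : 1 ≤ l := by rcases hlodd with ⟨m, hm⟩; omega
      obtain ⟨Mj, hnone, hoff, hPhi⟩ := IH l (by omega) hlodd (by omega)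
      have hE_l1 : M₁.m (x (l+1)) = some (x (l+2)) := by
        refine hE1 (l+1) (by omega) ?_
        rcases hlodd with ⟨m, hm⟩; exact ⟨m+1, by omega⟩
      have hMj_l1 : Mj.m (x (l+1)) = M₁.m (x (l+1)) :=
        hoff (x (l+1)) (fun i hi he => by
          have := hinj (l+1) (by omega) i (by omega) he; omega)
      have hMj_l2 : Mj.m (x (l+2)) = M₁.m (x (l+2)) :=
        hoff (x (l+2)) (fun i hi he => by
          have := hinj (l+2) (by omega) i (by omega) he; omega)
      have hEdge : I.E (x l) (x (l+1)) := M₂.valid _ _ (hE2 l (by omega) hlodd)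
      obtain ⟨M', ha, hb, hc, hoff'⟩ :=
        transfer I Mj (x l) (x (l+1)) (x (l+2)) hnone (hMj_l1.trans hE_l1) hEdge
      refine ⟨M', hc, ?_, ?_⟩
      · intro z hz
        rw [hoff' z (hz l (by omega)) (hz (l+1) (by omega)) (hz (l+2) le_rfl)]
        exact hoff z (fun i hi => hz i (by omega))
      · have hM1l : M₁.m (x l) = some (x (l-1)) := by
          have h := hE1 (l-1) (by omega) (by rcases hlodd with ⟨m, hm⟩; exact ⟨m, by omega⟩)
          rw [show l - 1 + 1 = l by omega] at h
          exact (M₁.msymm _ _).1 h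
        have hM1l2 : M₁.m (x (l+2)) = some (x (l+1)) := (M₁.msymm _ _).1 hE_l1
        have hd1 : x l ≠ x (l+1) := hxne l (by omega) (l+1) (by omega) (by omega)
        have hd2 : x l ≠ x (l+2) := hxne l (by omega) (l+2) (by omega) (by omega)
        have hd3 : x (l+1) ≠ x (l+2) := hxne (l+1) (by omega) (l+2) (by omega) (by omega)
        have hd4 : x (l+1) ≠ x (l-1) := hxne (l+1) (by omega) (l-1) (by omega) (by omega)
        have hd5 : x l ≠ x (l+2) := hd2
        have hPhi2 := Phi_diff I M' Mj M₁ {x l, x (l+1), x (l+2)} (fun z hz => by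
          simp only [Finset.mem_insert, Finset.mem_singleton] at hz
          push_neg at hz
          exact hoff' z hz.1 hz.2.1 hz.2.2)
        rw [hPhi2, hPhi, sum3 _ hd1 hd2 hd3]
        rw [vote_some_some I ha hM1l hd4, vote_none_some I hnone hM1l,
          vote_some_some I hb hE_l1 hd2,
          vote_same I (hMj_l1.trans rfl),
          vote_none_some I hc hM1l2, vote_same I hMj_l2]
        rw [show l + 2 = (l+1)+1 from rfl, Ssum_succ I x (l+1) (by omega),
          Ssum_succ I x l hlpos]
        rw [vt_odd I x hlodd, vt_even I x (t := l+1)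
          (by rcases hlodd with ⟨m, hm⟩; exact ⟨m+1, by omega⟩)]
        rw [show l + 1 - 1 = l from rfl]
        ring
end PathSec
end PopAux
namespace PopAux
variable {V : Type} [Fintype V] [DecidableEq V]

section PathSec2
variable (I : PMInstance V) (M₁ M₂ : Matching V I.E) (x : ℕ → V) (N : ℕ)

lemma P2core
    (hinj : ∀ i, i ≤ N → ∀ k, k ≤ N → x i = x k → i = k)
    (hE1 : ∀ i, i < N → Even i → M₁.m (x i) = some (x (i+1)))
    (hE2 : ∀ i, i < N → Odd i → M₂.m (x i) = some (x (i+1)))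
    (h0 : M₂.m (x 0) = none) :
    ∀ j, Even j → 2 ≤ j → j ≤ N → ∃ Mj : Matching V I.E,
      Mj.m (x j) = none ∧
      (∀ z, (∀ i, i ≤ j → z ≠ x i) → Mj.m z = M₂.m z) ∧
      Phi I Mj M₂ = I.w (x 0) - Ssum I x j - I.w (x j) := by
  have hxne : ∀ i, i ≤ N → ∀ k, k ≤ N → i ≠ k → x i ≠ x k :=
    fun i hi k hk hik he => hik (hinj i hi k hk he)
  intro j
  induction j using Nat.strong_induction_on with
  | _ j IH =>
    intro heven hj2 hjN
    by_cases hj1 : j = 2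
    · subst hj1
      have h12 : M₂.m (x 1) = some (x 2) := hE2 1 (by omega) odd_one
      have h21 : M₂.m (x 2) = some (x 1) := (M₂.msymm _ _).1 h12
      have hEdge : I.E (x 0) (x 1) := M₁.valid _ _ (hE1 0 (by omega) Even.zero)
      obtain ⟨M', ha, hb, hc, hoff⟩ := transfer I M₂ (x 0) (x 1) (x 2) h0 h12 hEdge
      refine ⟨M', hc, fun z hz =>
        hoff z (hz 0 (by omega)) (hz 1 (by omega)) (hz 2 le_rfl), ?_⟩
      have hd1 : x 0 ≠ x 1 := hxne 0 (by omega) 1 (by omega) (by omega)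
      have hd2 : x 0 ≠ x 2 := hxne 0 (by omega) 2 (by omega) (by omega)
      have hd3 : x 1 ≠ x 2 := hxne 1 (by omega) 2 (by omega) (by omega)
      have hPhi := Phi_diff I M' M₂ M₂ {x 0, x 1, x 2} (fun z hz => by
        simp only [Finset.mem_insert, Finset.mem_singleton] at hz
        push_neg at hz
        exact hoff z hz.1 hz.2.1 hz.2.2)
      rw [hPhi, Phi_self, sum3 _ hd1 hd2 hd3, vote_some_none I ha h0,
        vote_some_some I hb h12 hd2,
        vote_none_some I hc h21,
        vote_same I (M := M₂) (z := x 0) rfl, vote_same I (M := M₂) (z := x 1) rfl,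
        vote_same I (M := M₂) (z := x 2) rfl]
      rw [show (2:ℕ) = 1 + 1 from rfl, Ssum_succ I x 1 le_rfl, Ssum_one, vt_odd I x odd_one]
      rw [ite_pref_flip I (M'.valid _ _ hb) (M₂.valid _ _ h12) hd2]
      rw [show (1:ℕ) + 1 = 2 from rfl, show (1:ℕ) - 1 = 0 from rfl]
      ring
    · obtain ⟨m0, hm0⟩ := heven
      obtain ⟨l, rfl⟩ : ∃ l, j = l + 2 := ⟨j - 2, by omega⟩
      have hleven : Even l := ⟨m0 - 1, by omega⟩
      have hl2 : 2 ≤ l := by omega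
      obtain ⟨Mj, hnone, hoff, hPhi⟩ := IH l (by omega) hleven hl2 (by omega)
      have hlodd1 : Odd (l+1) := hleven.add_one
      have hE_l1 : M₂.m (x (l+1)) = some (x (l+2)) := hE2 (l+1) (by omega) hlodd1
      have hMj_l1 : Mj.m (x (l+1)) = M₂.m (x (l+1)) :=
        hoff (x (l+1)) (fun i hi he => by
          have := hinj (l+1) (by omega) i (by omega) he; omega)
      have hMj_l2 : Mj.m (x (l+2)) = M₂.m (x (l+2)) :=
        hoff (x (l+2)) (fun i hi he => by
          have := hinj (l+2) (by omega) i (by omega) he; omega)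
      have hEdge : I.E (x l) (x (l+1)) := M₁.valid _ _ (hE1 l (by omega) hleven)
      obtain ⟨M', ha, hb, hc, hoff'⟩ :=
        transfer I Mj (x l) (x (l+1)) (x (l+2)) hnone (hMj_l1.trans hE_l1) hEdge
      refine ⟨M', hc, ?_, ?_⟩
      · intro z hz
        rw [hoff' z (hz l (by omega)) (hz (l+1) (by omega)) (hz (l+2) le_rfl)]
        exact hoff z (fun i hi => hz i (by omega))
      · have hM2l : M₂.m (x l) = some (x (l-1)) := by
          have hlm1odd : Odd (l-1) := by
            rcases hleven with ⟨m, hm⟩; exact ⟨m - 1, by omega⟩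
          have h := hE2 (l-1) (by omega) hlm1odd
          rw [show l - 1 + 1 = l by omega] at h
          exact (M₂.msymm _ _).1 h
        have hM2l2 : M₂.m (x (l+2)) = some (x (l+1)) := (M₂.msymm _ _).1 hE_l1
        have hd1 : x l ≠ x (l+1) := hxne l (by omega) (l+1) (by omega) (by omega)
        have hd2 : x l ≠ x (l+2) := hxne l (by omega) (l+2) (by omega) (by omega)
        have hd3 : x (l+1) ≠ x (l+2) := hxne (l+1) (by omega) (l+2) (by omega) (by omega)
        have hd4 : x (l+1) ≠ x (l-1) := hxne (l+1) (by omega) (l-1) (by omega) (by omega)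
        have hPhi2 := Phi_diff I M' Mj M₂ {x l, x (l+1), x (l+2)} (fun z hz => by
          simp only [Finset.mem_insert, Finset.mem_singleton] at hz
          push_neg at hz
          exact hoff' z hz.1 hz.2.1 hz.2.2)
        rw [hPhi2, hPhi, sum3 _ hd1 hd2 hd3]
        rw [vote_some_some I ha hM2l hd4, vote_none_some I hnone hM2l,
          vote_some_some I hb hE_l1 hd2,
          vote_same I (hMj_l1.trans rfl),
          vote_none_some I hc hM2l2, vote_same I hMj_l2]
        rw [show l + 2 = (l+1)+1 from rfl, Ssum_succ I x (l+1) (by omega),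
          Ssum_succ I x l (by omega)]
        rw [vt_odd I x hlodd1, vt_even I x hleven]
        rw [show l + 1 - 1 = l from rfl, show l + 1 + 1 = l + 2 from rfl]
        rw [ite_pref_flip I (M'.valid _ _ ha) (M₂.valid _ _ hM2l) hd4]
        rw [ite_pref_flip I (M'.valid _ _ hb) (M₂.valid _ _ hE_l1) hd2]
        ring

lemma P1 (h₁ : popular I M₁)
    (hinj : ∀ i, i ≤ N → ∀ k, k ≤ N → x i = x k → i = k)
    (hE1 : ∀ i, i < N → Even i → M₁.m (x i) = some (x (i+1)))
    (hE2 : ∀ i, i < N → Odd i → M₂.m (x i) = some (x (i+1))) :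
    ∀ j, Odd j → j ≤ N → - I.w (x 0) + Ssum I x j - I.w (x j) ≤ 0 := by
  intro j hj hjN
  obtain ⟨Mj, _, _, hPhi⟩ := P1core I M₁ M₂ x N hinj hE1 hE2 j hj hjN
  rw [← hPhi]
  exact Phi_nonpos I Mj M₁ h₁

lemma P2 (h₂ : popular I M₂)
    (hinj : ∀ i, i ≤ N → ∀ k, k ≤ N → x i = x k → i = k)
    (hE1 : ∀ i, i < N → Even i → M₁.m (x i) = some (x (i+1)))
    (hE2 : ∀ i, i < N → Odd i → M₂.m (x i) = some (x (i+1)))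
    (h0 : M₂.m (x 0) = none) :
    ∀ j, Even j → 2 ≤ j → j ≤ N → I.w (x 0) - Ssum I x j - I.w (x j) ≤ 0 := by
  intro j hj hj2 hjN
  obtain ⟨Mj, _, _, hPhi⟩ := P2core I M₁ M₂ x N hinj hE1 hE2 h0 j hj hj2 hjN
  rw [← hPhi]
  exact Phi_nonpos I Mj M₂ h₂

end PathSec2
end PopAux
namespace PopAux

lemma numB (c : ℚ) (hc : 3 < c) (N : ℕ) (hN : Even N) (v S : ℕ → ℚ)
    (hrec : ∀ j, 1 ≤ j → S (j+1) = S j + v j)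
    (hodd : ∀ t, 1 ≤ t → t < N → Odd t → v t = c ∨ v t = -c)
    (heven : ∀ t, 1 ≤ t → t < N → Even t → v t = 1 ∨ v t = -1)
    (hlow : ∀ j, 1 ≤ j → j ≤ N → 0 ≤ S j)
    (hup : ∀ j, 1 ≤ j → j ≤ N → S j ≤ c+1)
    (hSN : S N = 0) :
    ∀ j, Odd j → j < N → S j ≠ 0 := by
  suffices h : ∀ d j, N - j = d → Odd j → j < N → S j = 0 → False by
    intro j hj hjN hS; exact h (N - j) j rfl hj hjN hS
  intro d
  induction d using Nat.strong_induction_on with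
  | _ d IH =>
    intro j hd hj hjN hS0
    obtain ⟨mj, hmj⟩ := hj
    obtain ⟨mN, hmN⟩ := hN
    have hj1 : 1 ≤ j := by omega
    have e1 : S (j+1) = S j + v j := hrec j hj1
    have hv1 : v j = c := by
      rcases hodd j hj1 hjN ⟨mj, hmj⟩ with h | h
      · exact h
      · exfalso
        have := hlow (j+1) (by omega) (by omega)
        rw [e1, hS0, h] at this; linarith
    have hSj1 : S (j+1) = c := by rw [e1, hS0, hv1]; ring
    by_cases hcase1 : j + 1 = N
    · rw [hcase1, hSN] at hSj1; linarith
    have hj1N : j + 1 < N := by omega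
    have hj2N : j + 2 < N := by omega
    have e2 : S (j+2) = S (j+1) + v (j+1) := hrec (j+1) (by omega)
    have hv2 := heven (j+1) (by omega) hj1N ⟨mj+1, by omega⟩
    have e3 : S (j+3) = S (j+2) + v (j+2) := hrec (j+2) (by omega)
    have hv3 := hodd (j+2) (by omega) hj2N ⟨mj+1, by omega⟩
    have l3 := hlow (j+3) (by omega) (by omega)
    have u3 := hup (j+3) (by omega) (by omega)
    have hSj3 : S (j+3) = 1 ∧ S (j+2) = c + 1 := by
      rcases hv2 with h2 | h2 <;> rcases hv3 with h3 | h3 <;> constructor <;> linarith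
    by_cases hcase3 : j + 3 = N
    · rw [hcase3, hSN] at hSj3; have := hSj3.1; linarith
    have hj3N : j + 3 < N := by omega
    have hj4N : j + 4 < N := by omega
    have e4 : S (j+4) = S (j+3) + v (j+3) := hrec (j+3) (by omega)
    have hv4 := heven (j+3) (by omega) hj3N ⟨mj+2, by omega⟩
    have e5 : S (j+5) = S (j+4) + v (j+4) := hrec (j+4) (by omega)
    have hv5 := hodd (j+4) (by omega) hj4N ⟨mj+2, by omega⟩
    have l5 := hlow (j+5) (by omega) (by omega)
    have u5 := hup (j+5) (by omega) (by omega)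
    have hS4 : S (j+4) = 0 := by
      rcases hv4 with h4 | h4 <;> rcases hv5 with h5 | h5 <;> linarith [hSj3.1]
    exact IH (N - (j+4)) (by omega) (j+4) rfl ⟨mj+2, by omega⟩ hj4N hS4

lemma numA (c : ℚ) (hc : 3 < c) (N : ℕ) (hN : Even N) (v S : ℕ → ℚ)
    (hrec : ∀ j, 1 ≤ j → S (j+1) = S j + v j)
    (hodd : ∀ t, 1 ≤ t → t < N → Odd t → v t = 1 ∨ v t = -1)
    (heven : ∀ t, 1 ≤ t → t < N → Even t → v t = c ∨ v t = -c)
    (hlow : ∀ j, 1 ≤ j → j ≤ N → 0 ≤ S j)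
    (hup : ∀ j, 1 ≤ j → j ≤ N → S j ≤ c+1)
    (hSN : S N = 0) :
    ∀ j, Odd j → j < N → S j ≠ 0 := by
  suffices h : ∀ d j, N - j = d → Odd j → j < N → S j = 0 → False by
    intro j hj hjN hS; exact h (N - j) j rfl hj hjN hS
  intro d
  induction d using Nat.strong_induction_on with
  | _ d IH =>
    intro j hd hj hjN hS0
    obtain ⟨mj, hmj⟩ := hj
    obtain ⟨mN, hmN⟩ := hN
    have hj1 : 1 ≤ j := by omega
    have e1 : S (j+1) = S j + v j := hrec j hj1
    have hv1 : v j = 1 := by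
      rcases hodd j hj1 hjN ⟨mj, hmj⟩ with h | h
      · exact h
      · exfalso
        have := hlow (j+1) (by omega) (by omega)
        rw [e1, hS0, h] at this; linarith
    have hSj1 : S (j+1) = 1 := by rw [e1, hS0, hv1]; ring
    by_cases hcase1 : j + 1 = N
    · rw [hcase1, hSN] at hSj1; linarith
    have hj1N : j + 1 < N := by omega
    have hj2N : j + 2 < N := by omega
    have e2 : S (j+2) = S (j+1) + v (j+1) := hrec (j+1) (by omega)
    have hv2 := heven (j+1) (by omega) hj1N ⟨mj+1, by omega⟩
    have l2 := hlow (j+2) (by omega) (by omega)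
    have hSj2 : S (j+2) = c + 1 := by
      rcases hv2 with h2 | h2 <;> linarith
    have e3 : S (j+3) = S (j+2) + v (j+2) := hrec (j+2) (by omega)
    have hv3 := hodd (j+2) (by omega) hj2N ⟨mj+1, by omega⟩
    have u3 := hup (j+3) (by omega) (by omega)
    have hSj3 : S (j+3) = c := by
      rcases hv3 with h3 | h3 <;> linarith
    by_cases hcase3 : j + 3 = N
    · rw [hcase3, hSN] at hSj3; linarith
    have hj3N : j + 3 < N := by omega
    have hj4N : j + 4 < N := by omega
    have e4 : S (j+4) = S (j+3) + v (j+3) := hrec (j+3) (by omega)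
    have hv4 := heven (j+3) (by omega) hj3N ⟨mj+2, by omega⟩
    have u4 := hup (j+4) (by omega) (by omega)
    have l4 := hlow (j+4) (by omega) (by omega)
    have hS4 : S (j+4) = 0 := by
      rcases hv4 with h4 | h4 <;> linarith
    exact IH (N - (j+4)) (by omega) (j+4) rfl ⟨mj+2, by omega⟩ hj4N hS4

end PopAux
namespace PopAux
variable {V : Type} [Fintype V] [DecidableEq V]

section RevSec
variable (I : PMInstance V) (M₁ M₂ : Matching V I.E) (x : ℕ → V) (N : ℕ)

lemma vt_rev (hNeven : Even N)
    (hinj : ∀ i, i ≤ N → ∀ k, k ≤ N → x i = x k → i = k)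
    (hE1 : ∀ i, i < N → Even i → M₁.m (x i) = some (x (i+1)))
    (hE2 : ∀ i, i < N → Odd i → M₂.m (x i) = some (x (i+1))) :
    ∀ t, 1 ≤ t → t < N → vt I (fun i => x (N - i)) t = - vt I x (N - t) := by
  intro t ht1 htN
  have hs1 : 1 ≤ N - t := by omega
  have hsN : N - t < N := by omega
  have hne : x (N - t - 1) ≠ x (N - t + 1) := fun he => by
    have := hinj (N - t - 1) (by omega) (N - t + 1) (by omega) he; omega
  obtain ⟨a, ha⟩ := hNeven
  rcases Nat.even_or_odd t with hte | hto
  · -- t even, s even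
    obtain ⟨b, hb⟩ := hte
    have hse : Even (N - t) := ⟨a - b, by omega⟩
    have hsodd1 : Odd (N - t - 1) := by
      rcases hse with ⟨e, he⟩; exact ⟨e - 1, by omega⟩
    have hEa : I.E (x (N - t)) (x (N - t + 1)) :=
      M₁.valid _ _ (hE1 (N - t) hsN hse)
    have hEb : I.E (x (N - t)) (x (N - t - 1)) := by
      have h := hE2 (N - t - 1) (by omega) hsodd1
      rw [show N - t - 1 + 1 = N - t by omega] at h
      exact M₂.valid _ _ ((M₂.msymm _ _).1 h)
    have hte' : Even t := ⟨b, hb⟩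
    rw [vt_even I (fun i => x (N - i)) hte', vt_even I x hse]
    rw [congrArg x (show N - (t+1) = N - t - 1 by omega),
      congrArg x (show N - (t-1) = N - t + 1 by omega)]
    exact ite_pref_flip I hEa hEb hne.symm
  · -- t odd, s odd
    obtain ⟨b, hb⟩ := hto
    have hso : Odd (N - t) := ⟨a - b - 1, by omega⟩
    have hseven1 : Even (N - t - 1) := by
      rcases hso with ⟨e, he⟩; exact ⟨e, by omega⟩
    have hEa : I.E (x (N - t)) (x (N - t + 1)) :=
      M₂.valid _ _ (hE2 (N - t) hsN hso)
    have hEb : I.E (x (N - t)) (x (N - t - 1)) := by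
      have h := hE1 (N - t - 1) (by omega) hseven1
      rw [show N - t - 1 + 1 = N - t by omega] at h
      exact M₁.valid _ _ ((M₁.msymm _ _).1 h)
    rw [vt_odd I (fun i => x (N - i)) ⟨b, hb⟩, vt_odd I x hso]
    rw [congrArg x (show N - (t+1) = N - t - 1 by omega),
      congrArg x (show N - (t-1) = N - t + 1 by omega)]
    exact ite_pref_flip I hEb hEa hne

lemma Ssum_rev (hNeven : Even N) (hNpos : 0 < N)
    (hinj : ∀ i, i ≤ N → ∀ k, k ≤ N → x i = x k → i = k)
    (hE1 : ∀ i, i < N → Even i → M₁.m (x i) = some (x (i+1)))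
    (hE2 : ∀ i, i < N → Odd i → M₂.m (x i) = some (x (i+1))) :
    ∀ j, 1 ≤ j → j ≤ N → Ssum I (fun i => x (N - i)) j = Ssum I x (N - j + 1) - Ssum I x N := by
  intro j hj1
  induction j, hj1 using Nat.le_induction with
  | base =>
    intro _
    rw [Ssum_one, show N - 1 + 1 = N by omega]
    ring
  | succ j hj IH =>
    intro hjN
    rw [Ssum_succ I _ j hj, IH (by omega),
      vt_rev I M₁ M₂ x N hNeven hinj hE1 hE2 j hj (by omega)]
    have : Ssum I x (N - j + 1) = Ssum I x (N - j) + vt I x (N - j) :=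
      Ssum_succ I x (N - j) (by omega)
    rw [this, show N - (j+1) + 1 = N - j by omega]
    ring

end RevSec
end PopAux
namespace PopAux
variable {V : Type} [Fintype V] [DecidableEq V]

lemma same_side_false (I : PMInstance V) (c : ℚ) (hc : 3 < c)
    (hA : ∀ a ∈ I.A, I.w a = c) (hB : ∀ b : V, b ∉ I.A → I.w b = 1)
    (M₁ M₂ : Matching V I.E) (h₁ : popular I M₁) (h₂ : popular I M₂)
    (x : ℕ → V) (N : ℕ) (hNpos : 0 < N) (hNeven : Even N)
    (hinj : ∀ i, i ≤ N → ∀ k, k ≤ N → x i = x k → i = k)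
    (hE1 : ∀ i, i < N → Even i → M₁.m (x i) = some (x (i+1)))
    (hE2 : ∀ i, i < N → Odd i → M₂.m (x i) = some (x (i+1)))
    (h0 : M₂.m (x 0) = none) (hend : M₁.m (x N) = none) : False := by
  obtain ⟨a, ha⟩ := hNeven
  have hN2 : 2 ≤ N := by omega
  have hedge : ∀ i, i < N → I.E (x i) (x (i+1)) := by
    intro i hi
    rcases Nat.even_or_odd i with h | h
    · exact M₁.valid _ _ (hE1 i hi h)
    · exact M₂.valid _ _ (hE2 i hi h)
  have hside : ∀ i, i ≤ N → (x i ∈ I.A ↔ (Even i ↔ x 0 ∈ I.A)) := by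
    intro i
    induction i with
    | zero => intro _; simp
    | succ n ih =>
      intro hn
      have hbip := I.bipartite _ _ (hedge n (by omega))
      have hihn := ih (by omega)
      rw [Nat.even_add_one]
      tauto
  have hwx : ∀ i, i ≤ N → I.w (x i) = if Even i ↔ x 0 ∈ I.A then c else 1 := by
    intro i hi
    by_cases h : Even i ↔ x 0 ∈ I.A
    · rw [if_pos h]; exact hA _ ((hside i hi).2 h)
    · rw [if_neg h]; exact hB _ (fun hmem => h ((hside i hi).1 hmem))
  have hwEven : ∀ i, i ≤ N → Even i → I.w (x i) = I.w (x 0) := by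
    intro i hi he
    rw [hwx i hi, hwx 0 (by omega)]
    simp [he, Even.zero]
  have hwOddsum : ∀ i, i ≤ N → Odd i → I.w (x 0) + I.w (x i) = c + 1 := by
    intro i hi ho
    have hne : ¬ Even i := fun hev => by
      rcases hev with ⟨p, hp⟩; rcases ho with ⟨q, hq⟩; omega
    rw [hwx i hi, hwx 0 (by omega)]
    by_cases hx0 : x 0 ∈ I.A
    · rw [if_pos (by simp [hx0, Even.zero]), if_neg (by simp [hx0, hne])]
    · rw [if_neg (by simp [hx0, Even.zero]), if_pos (by simp [hx0, hne])]
      ring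
  -- reversed-path prerequisites
  have hinj' : ∀ i, i ≤ N → ∀ k, k ≤ N → x (N - i) = x (N - k) → i = k := by
    intro i hi k hk he
    have := hinj (N - i) (by omega) (N - k) (by omega) he; omega
  have hE1' : ∀ i, i < N → Even i → M₂.m (x (N - i)) = some (x (N - (i+1))) := by
    intro i hi hev
    have hodd : Odd (N - i - 1) := by
      rcases hev with ⟨b, hb⟩; exact ⟨a - b - 1, by omega⟩
    have h := hE2 (N - i - 1) (by omega) hodd
    rw [show N - i - 1 + 1 = N - i by omega] at h
    rw [show N - (i+1) = N - i - 1 by omega]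
    exact (M₂.msymm _ _).1 h
  have hE2' : ∀ i, i < N → Odd i → M₁.m (x (N - i)) = some (x (N - (i+1))) := by
    intro i hi hodd
    have hev : Even (N - i - 1) := by
      rcases hodd with ⟨b, hb⟩; exact ⟨a - b - 1, by omega⟩
    have h := hE1 (N - i - 1) (by omega) hev
    rw [show N - i - 1 + 1 = N - i by omega] at h
    rw [show N - (i+1) = N - i - 1 by omega]
    exact (M₁.msymm _ _).1 h
  have h0' : M₁.m (x (N - 0)) = none := by rw [Nat.sub_zero]; exact hend
  have hP1x := P1 I M₁ M₂ x N h₁ hinj hE1 hE2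
  have hP2x := P2 I M₁ M₂ x N h₂ hinj hE1 hE2 h0
  have hP1r := P1 I M₂ M₁ (fun i => x (N - i)) N h₂ hinj' hE1' hE2'
  have hP2r := P2 I M₂ M₁ (fun i => x (N - i)) N h₁ hinj' hE1' hE2' h0'
  have hrev := Ssum_rev I M₁ M₂ x N ⟨a, ha⟩ hNpos hinj hE1 hE2
  -- S N = 0
  have hSN : Ssum I x N = 0 := by
    have hu := hP2x N ⟨a, ha⟩ hN2 le_rfl
    have hl := hP2r N ⟨a, ha⟩ hN2 le_rfl
    simp only [Nat.sub_zero, Nat.sub_self] at hl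
    rw [hrev N (by omega) le_rfl, show N - N + 1 = 1 by omega, Ssum_one] at hl
    have hwN : I.w (x N) = I.w (x 0) := hwEven N le_rfl ⟨a, ha⟩
    rw [hwN] at hu hl
    linarith
  -- bounds
  have hlow : ∀ k, 1 ≤ k → k ≤ N → 0 ≤ Ssum I x k := by
    intro k hk1 hkN
    rcases Nat.even_or_odd k with hke | hko
    · have hk2 : 2 ≤ k := by rcases hke with ⟨b, hb⟩; omega
      have h := hP2x k hke hk2 hkN
      rw [hwEven k hkN hke] at h
      linarith
    · obtain ⟨q, hq⟩ := hko
      have hkN' : k < N := by omega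
      have hje : Even (N - k + 1) := ⟨a - q, by omega⟩
      have hineq := hP2r (N - k + 1) hje (by omega) (by omega)
      simp only [Nat.sub_zero] at hineq
      rw [hrev (N - k + 1) (by omega) (by omega),
        show N - (N - k + 1) + 1 = k by omega, hSN] at hineq
      rw [show N - (N - k + 1) = k - 1 by omega] at hineq
      have h1 : I.w (x N) = I.w (x 0) := hwEven N le_rfl ⟨a, ha⟩
      have h2 : I.w (x (k - 1)) = I.w (x 0) := hwEven (k-1) (by omega) ⟨q, by omega⟩
      rw [h1, h2] at hineq
      linarith
  have hup : ∀ k, 1 ≤ k → k ≤ N → Ssum I x k ≤ c + 1 := by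
    intro k hk1 hkN
    rcases Nat.even_or_odd k with hke | hko
    · obtain ⟨b, hb⟩ := hke
      have hk2 : 2 ≤ k := by omega
      have hjo : Odd (N - k + 1) := ⟨a - b, by omega⟩
      have hineq := hP1r (N - k + 1) hjo (by omega)
      simp only [Nat.sub_zero] at hineq
      rw [hrev (N - k + 1) (by omega) (by omega),
        show N - (N - k + 1) + 1 = k by omega, hSN] at hineq
      rw [show N - (N - k + 1) = k - 1 by omega] at hineq
      have h1 : I.w (x N) = I.w (x 0) := hwEven N le_rfl ⟨a, ha⟩
      have h2 : I.w (x 0) + I.w (x (k - 1)) = c + 1 :=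
        hwOddsum (k-1) (by omega) ⟨b - 1, by omega⟩
      rw [h1] at hineq
      linarith
    · have h := hP1x k hko hkN
      have hsum := hwOddsum k hkN hko
      linarith
  have hrec : ∀ j, 1 ≤ j → Ssum I x (j+1) = Ssum I x j + vt I x j :=
    fun j hj => Ssum_succ I x j hj
  by_cases hx0 : x 0 ∈ I.A
  · have hw0 : I.w (x 0) = c := hA _ hx0
    have hvo : ∀ t, 1 ≤ t → t < N → Odd t → vt I x t = 1 ∨ vt I x t = -1 := by
      intro t h1t htN ht
      have hw : I.w (x t) = 1 := by
        have := hwOddsum t (by omega) ht; linarith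
      rcases vt_pm I x t with h | h <;> rw [hw] at h
      · exact Or.inl h
      · exact Or.inr h
    have hve : ∀ t, 1 ≤ t → t < N → Even t → vt I x t = c ∨ vt I x t = -c := by
      intro t h1t htN ht
      have hw : I.w (x t) = c := by rw [hwEven t (by omega) ht, hw0]
      rcases vt_pm I x t with h | h <;> rw [hw] at h
      · exact Or.inl h
      · exact Or.inr h
    exact numA c hc N ⟨a, ha⟩ (vt I x) (Ssum I x) hrec hvo hve hlow hup hSN
      1 odd_one (by omega) (Ssum_one I x)
  · have hw0 : I.w (x 0) = 1 := hB _ hx0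
    have hvo : ∀ t, 1 ≤ t → t < N → Odd t → vt I x t = c ∨ vt I x t = -c := by
      intro t h1t htN ht
      have hw : I.w (x t) = c := by
        have := hwOddsum t (by omega) ht; linarith
      rcases vt_pm I x t with h | h <;> rw [hw] at h
      · exact Or.inl h
      · exact Or.inr h
    have hve : ∀ t, 1 ≤ t → t < N → Even t → vt I x t = 1 ∨ vt I x t = -1 := by
      intro t h1t htN ht
      have hw : I.w (x t) = 1 := by rw [hwEven t (by omega) ht, hw0]
      rcases vt_pm I x t with h | h <;> rw [hw] at h
      · exact Or.inl h
      · exact Or.inr h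
    exact numB c hc N ⟨a, ha⟩ (vt I x) (Ssum I x) hrec hvo hve hlow hup hSN
      1 odd_one (by omega) (Ssum_one I x)

end PopAux
namespace PopAux
variable {V : Type} [Fintype V] [DecidableEq V]

lemma extract (I : PMInstance V) (M₁ M₂ : Matching V I.E) (u t : V)
    (h0u : M₂.m u = none)
    (hreach : Relation.ReflTransGen (symmDiffRel M₁ M₂) u t) :
    t = u ∨ ∃ (N : ℕ) (x : ℕ → V), 0 < N ∧ x 0 = u ∧ x N = t ∧
      (∀ i, i ≤ N → ∀ k, k ≤ N → x i = x k → i = k) ∧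
      (∀ i, i < N → Even i → M₁.m (x i) = some (x (i+1))) ∧
      (∀ i, i < N → Odd i → M₂.m (x i) = some (x (i+1))) := by
  induction hreach with
  | refl => exact Or.inl rfl
  | @tail b t hab hsd IH =>
    rcases IH with hbu | ⟨N, x, hNpos, hx0, hxN, hinj, hE1, hE2⟩
    · -- b = u : single-edge path
      rw [hbu] at hsd
      have hm1 : M₁.m u = some t := by
        rcases hsd with ⟨h, _⟩ | ⟨h, _⟩
        · exact h
        · rw [h0u] at h; exact nomatch h
      have hut : u ≠ t := m_ne_self I M₁ u t hm1
      right
      refine ⟨1, fun i => if i = 0 then u else t, by omega, by simp, by simp, ?_, ?_, ?_⟩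
      · intro i hi k hk he
        interval_cases i <;> interval_cases k <;> simp_all
      · intro i hi _
        interval_cases i
        simpa using hm1
      · intro i hi ho
        interval_cases i
        exact absurd ho (by simp)
    · -- extend or truncate the path ending at b = x N
      subst hxN
      by_cases hteq : t = x (N - 1)
      · -- truncate
        by_cases hN1 : N = 1
        · left; rw [hteq, hN1]; simpa using hx0
        · right
          refine ⟨N - 1, x, by omega, hx0, by rw [hteq], ?_, ?_, ?_⟩
          · intro i hi k hk he; exact hinj i (by omega) k (by omega) he
          · intro i hi he; exact hE1 i (by omega) he
          · intro i hi ho; exact hE2 i (by omega) ho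
      · -- extend
        right
        rcases Nat.even_or_odd N with hNe | hNo
        · -- last edge was an M₂ edge; new edge is M₁
          obtain ⟨a, ha⟩ := hNe
          have hN2 : 2 ≤ N := by omega
          have hlast : M₂.m (x N) = some (x (N-1)) := by
            have h := hE2 (N-1) (by omega) ⟨a - 1, by omega⟩
            rw [show N - 1 + 1 = N by omega] at h
            exact (M₂.msymm _ _).1 h
          have hm1 : M₁.m (x N) = some t := by
            rcases hsd with ⟨h, _⟩ | ⟨h, _⟩
            · exact h
            · rw [hlast] at h
              exact absurd (Option.some_injective V h).symm hteq
          have ht_notin : ∀ i, i ≤ N → t ≠ x i := by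
            intro i hi he
            have hmsym : M₁.m (x i) = some (x N) := (M₁.msymm _ _).1 (he ▸ hm1)
            by_cases hiN : i = N
            · subst hiN; exact I.loopless (x i) (M₁.valid _ _ hmsym)
            · rcases Nat.even_or_odd i with hie | hio
              · have h' := hE1 i (by omega) hie
                rw [h'] at hmsym
                have : i + 1 = N := hinj (i+1) (by omega) N le_rfl
                  (Option.some_injective V hmsym)
                exact hteq (by rw [he]; congr 1; omega)
              · obtain ⟨q, hq⟩ := hio
                have h' := hE1 (i-1) (by omega) ⟨q, by omega⟩
                rw [show i - 1 + 1 = i by omega] at h'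
                have h'' : M₁.m (x i) = some (x (i-1)) := (M₁.msymm _ _).1 h'
                rw [h''] at hmsym
                have := hinj (i-1) (by omega) N le_rfl (Option.some_injective V hmsym)
                omega
          refine ⟨N + 1, fun i => if i = N + 1 then t else x i, by omega,
            by have h01 : (0:ℕ) ≠ N + 1 := by omega
               simp [h01, hx0], by simp, ?_, ?_, ?_⟩
          · intro i hi k hk he
            replace he : (if i = N + 1 then t else x i) = (if k = N + 1 then t else x k) := he
            by_cases hik : i = N + 1 <;> by_cases hkk : k = N + 1
            · omega
            · rw [if_pos hik, if_neg hkk] at he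
              exact absurd he (ht_notin k (by omega))
            · rw [if_neg hik, if_pos hkk] at he
              exact absurd he.symm (ht_notin i (by omega))
            · rw [if_neg hik, if_neg hkk] at he
              exact hinj i (by omega) k (by omega) he
          · intro i hi hie
            show M₁.m (if i = N + 1 then t else x i)
              = some (if i + 1 = N + 1 then t else x (i + 1))
            by_cases hiN : i = N
            · subst hiN
              have c1 : i ≠ i + 1 := by omega
              rw [if_neg c1, if_pos rfl]
              exact hm1
            · have c1 : i ≠ N + 1 := by omega
              have c2 : i + 1 ≠ N + 1 := by omega
              rw [if_neg c1, if_neg c2]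
              exact hE1 i (by omega) hie
          · intro i hi hio
            show M₂.m (if i = N + 1 then t else x i)
              = some (if i + 1 = N + 1 then t else x (i + 1))
            have hiN : i ≠ N := by
              rcases hio with ⟨q, hq⟩; omega
            have c1 : i ≠ N + 1 := by omega
            have c2 : i + 1 ≠ N + 1 := by omega
            rw [if_neg c1, if_neg c2]
            exact hE2 i (by omega) hio
        · -- last edge was an M₁ edge; new edge is M₂
          obtain ⟨a, ha⟩ := hNo
          have hlast : M₁.m (x N) = some (x (N-1)) := by
            have h := hE1 (N-1) (by omega) ⟨a, by omega⟩
            rw [show N - 1 + 1 = N by omega] at h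
            exact (M₁.msymm _ _).1 h
          have hm2 : M₂.m (x N) = some t := by
            rcases hsd with ⟨h, _⟩ | ⟨h, _⟩
            · rw [hlast] at h
              exact absurd (Option.some_injective V h).symm hteq
            · exact h
          have ht_notin : ∀ i, i ≤ N → t ≠ x i := by
            intro i hi he
            have hmsym : M₂.m (x i) = some (x N) := (M₂.msymm _ _).1 (he ▸ hm2)
            by_cases hiN : i = N
            · subst hiN; exact I.loopless (x i) (M₂.valid _ _ hmsym)
            · rcases Nat.even_or_odd i with hie | hio
              · by_cases hi0 : i = 0
                · subst hi0
                  rw [hx0, h0u] at hmsym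
                  exact nomatch hmsym
                · obtain ⟨q, hq⟩ := hie
                  have h' := hE2 (i-1) (by omega) ⟨q - 1, by omega⟩
                  rw [show i - 1 + 1 = i by omega] at h'
                  have h'' : M₂.m (x i) = some (x (i-1)) := (M₂.msymm _ _).1 h'
                  rw [h''] at hmsym
                  have := hinj (i-1) (by omega) N le_rfl (Option.some_injective V hmsym)
                  omega
              · have h' := hE2 i (by omega) hio
                rw [h'] at hmsym
                have : i + 1 = N := hinj (i+1) (by omega) N le_rfl
                  (Option.some_injective V hmsym)
                exact hteq (by rw [he]; congr 1; omega)
          refine ⟨N + 1, fun i => if i = N + 1 then t else x i, by omega,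
            by have h01 : (0:ℕ) ≠ N + 1 := by omega
               simp [h01, hx0], by simp, ?_, ?_, ?_⟩
          · intro i hi k hk he
            replace he : (if i = N + 1 then t else x i) = (if k = N + 1 then t else x k) := he
            by_cases hik : i = N + 1 <;> by_cases hkk : k = N + 1
            · omega
            · rw [if_pos hik, if_neg hkk] at he
              exact absurd he (ht_notin k (by omega))
            · rw [if_neg hik, if_pos hkk] at he
              exact absurd he.symm (ht_notin i (by omega))
            · rw [if_neg hik, if_neg hkk] at he
              exact hinj i (by omega) k (by omega) he
          · intro i hi hie
            show M₁.m (if i = N + 1 then t else x i)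
              = some (if i + 1 = N + 1 then t else x (i + 1))
            have hiN : i ≠ N := by
              rcases hie with ⟨q, hq⟩; omega
            have c1 : i ≠ N + 1 := by omega
            have c2 : i + 1 ≠ N + 1 := by omega
            rw [if_neg c1, if_neg c2]
            exact hE1 i (by omega) hie
          · intro i hi hio
            show M₂.m (if i = N + 1 then t else x i)
              = some (if i + 1 = N + 1 then t else x (i + 1))
            by_cases hiN : i = N
            · subst hiN
              have c1 : i ≠ i + 1 := by omega
              rw [if_neg c1, if_pos rfl]
              exact hm2
            · have c1 : i ≠ N + 1 := by omega
              have c2 : i + 1 ≠ N + 1 := by omega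
              rw [if_neg c1, if_neg c2]
              exact hE2 i (by omega) hio

end PopAux
namespace PopAux
variable {V : Type} [Fintype V] [DecidableEq V]

lemma endpoint_none_aux (I : PMInstance V) {M₁ M₂ : Matching V I.E} {w z : V}
    (hz : M₁.m w = some z) (hsd : symmDiffRel M₁ M₂ w z)
    (hno : ¬ ∃ z', M₂.m w = some z' ∧ symmDiffRel M₁ M₂ w z') :
    M₂.m w = none := by
  cases hM2 : M₂.m w with
  | none => rfl
  | some z' =>
    exfalso
    apply hno
    refine ⟨z', hM2, ?_⟩
    rcases hsd with ⟨h1, h2⟩ | ⟨h1, h2⟩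
    · refine Or.inr ⟨hM2, fun hh => h2 ?_⟩
      have : z = z' := Option.some_injective V (hz.symm.trans hh)
      rw [this]; exact hM2
    · exact absurd hz h2

lemma endpoint_alt (I : PMInstance V) {M₁ M₂ : Matching V I.E} {w : V}
    (h : endpointOf M₁ M₂ w) : M₂.m w = none ∨ M₁.m w = none := by
  rcases h with ⟨⟨z, hz, hsd⟩, hno⟩ | ⟨⟨z, hz, hsd⟩, hno⟩
  · exact Or.inl (endpoint_none_aux I hz hsd hno)
  · right
    have hsd' : symmDiffRel M₂ M₁ w z := Or.symm hsd
    have hno' : ¬ ∃ z', M₁.m w = some z' ∧ symmDiffRel M₂ M₁ w z' := by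
      rintro ⟨z', h1, h2⟩
      exact hno ⟨z', h1, Or.symm h2⟩
    exact endpoint_none_aux I hz hsd' hno'

lemma endpoint_swap (I : PMInstance V) {M₁ M₂ : Matching V I.E} {w : V}
    (h : endpointOf M₁ M₂ w) : endpointOf M₂ M₁ w := by
  rcases h with ⟨⟨z, hz, hsd⟩, hno⟩ | ⟨⟨z, hz, hsd⟩, hno⟩
  · exact Or.inr ⟨⟨z, hz, Or.symm hsd⟩, fun ⟨z', h1, h2⟩ => hno ⟨z', h1, Or.symm h2⟩⟩
  · exact Or.inl ⟨⟨z, hz, Or.symm hsd⟩, fun ⟨z', h1, h2⟩ => hno ⟨z', h1, Or.symm h2⟩⟩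

lemma main_core (I : PMInstance V) (c : ℚ) (hc : 3 < c)
    (hA : ∀ a ∈ I.A, I.w a = c) (hB : ∀ b : V, b ∉ I.A → I.w b = 1)
    (M₁ M₂ : Matching V I.E) (h₁ : popular I M₁) (h₂ : popular I M₂)
    (u v : V) (hne : u ≠ v)
    (hreach : Relation.ReflTransGen (symmDiffRel M₁ M₂) u v)
    (hu2 : M₂.m u = none) (hv2 : M₂.m v = none ∨ M₁.m v = none) :
    (u ∈ I.A ↔ v ∉ I.A) := by
  rcases extract I M₁ M₂ u v hu2 hreach with h | ⟨N, x, hNpos, hx0, hxN, hinj, hE1, hE2⟩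
  · exact absurd h.symm hne
  have hedge : ∀ i, i < N → I.E (x i) (x (i+1)) := by
    intro i hi
    rcases Nat.even_or_odd i with h | h
    · exact M₁.valid _ _ (hE1 i hi h)
    · exact M₂.valid _ _ (hE2 i hi h)
  have hside : ∀ i, i ≤ N → (x i ∈ I.A ↔ (Even i ↔ x 0 ∈ I.A)) := by
    intro i
    induction i with
    | zero => intro _; simp
    | succ n ih =>
      intro hn
      have hbip := I.bipartite _ _ (hedge n (by omega))
      have hihn := ih (by omega)
      rw [Nat.even_add_one]
      tauto
  rcases Nat.even_or_odd N with hNe | hNo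
  · exfalso
    obtain ⟨b, hb⟩ := hNe
    have hN2 : 2 ≤ N := by omega
    have hlast : M₂.m (x N) = some (x (N-1)) := by
      have h := hE2 (N-1) (by omega) ⟨b - 1, by omega⟩
      rw [show N - 1 + 1 = N by omega] at h
      exact (M₂.msymm _ _).1 h
    have hend : M₁.m (x N) = none := by
      rcases hv2 with h | h
      · exfalso
        rw [hxN, h] at hlast
        exact nomatch hlast
      · rw [hxN]; exact h
    exact same_side_false I c hc hA hB M₁ M₂ h₁ h₂ x N hNpos ⟨b, hb⟩ hinj hE1 hE2
      (by rw [hx0]; exact hu2) hend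
  · have hsideN := hside N le_rfl
    have hNe' : ¬ Even N := fun he => by
      rcases he with ⟨p, hp⟩; rcases hNo with ⟨q, hq⟩; omega
    rw [hxN, hx0] at hsideN
    tauto

end PopAux

/-- Every path component of the symmetric difference of two popular matchings
has one endpoint in `A` and the other in `B` (for `w = c > 3` on `A`, `1` on `B`). -/
theorem path_endpoints_opposite_sides (I : PMInstance V) (c : ℚ) (hc : 3 < c)
    (hA : ∀ a ∈ I.A, I.w a = c) (hB : ∀ b : V, b ∉ I.A → I.w b = 1)
    (M₁ M₂ : Matching V I.E) (h₁ : popular I M₁) (h₂ : popular I M₂) :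
    ∀ u v : V, u ≠ v → Relation.ReflTransGen (symmDiffRel M₁ M₂) u v →
      endpointOf M₁ M₂ u → endpointOf M₁ M₂ v → (u ∈ I.A ↔ v ∉ I.A) := by
  intro u v hne hreach hu hv
  rcases hu with ⟨⟨z, hz, hsd⟩, hno⟩ | ⟨⟨z, hz, hsd⟩, hno⟩
  · have hu2 : M₂.m u = none := PopAux.endpoint_none_aux I hz hsd hno
    exact PopAux.main_core I c hc hA hB M₁ M₂ h₁ h₂ u v hne hreach hu2
      (PopAux.endpoint_alt I hv)
  · have hsd' : symmDiffRel M₂ M₁ u z := Or.symm hsd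
    have hno' : ¬ ∃ z', M₁.m u = some z' ∧ symmDiffRel M₂ M₁ u z' := by
      rintro ⟨z', ha, hb⟩
      exact hno ⟨z', ha, Or.symm hb⟩
    have hu2 : M₁.m u = none := PopAux.endpoint_none_aux I hz hsd' hno'
    have hreach' : Relation.ReflTransGen (symmDiffRel M₂ M₁) u v :=
      Relation.ReflTransGen.mono (r := symmDiffRel M₁ M₂) (p := symmDiffRel M₂ M₁)
        (fun a b hab => Or.symm hab) u v hreach
    exact PopAux.main_core I c hc hA hB M₂ M₁ h₂ h₁ u v hne hreach' hu2
      (PopAux.endpoint_alt I (PopAux.endpoint_swap I hv))
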